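/- Suppose φ : [0,1] → ℝ is twice continuously differentiable on (0,1) with φ'(0) = 0 (interpreted as lim_{p↓0} φ'(p) = 0) and there exist constants W > 0, c ≥ 0 such that |φ''(p)| ≤ W p^{α-2} + c for all p ∈ (0,1), where α ∈ (1,2). Then φ is Lipschitz continuous on [0,1] and φ' is (α-1)-Hölder continuous on (0,1). -/

import Mathlib

open Set Filter Topology

private lemma add_rpow_le_aux {a b s : ℝ} (ha : 0 ≤ a) (hb : 0 ≤ b) (hs : 0 ≤ s) (hs1 : s ≤ 1) :
    (a + b) ^ s ≤ a ^ s + b ^ s := by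
  have h := NNReal.rpow_add_le_add_rpow a.toNNReal b.toNNReal hs hs1
  have h2 := NNReal.coe_le_coe.2 h
  push_cast at h2
  rwa [Real.coe_toNNReal a ha, Real.coe_toNNReal b hb] at h2

/-- If `φ` is twice continuously differentiable on `(0,1)` with
`φ'(0) = 0` (as a right limit) and `|φ''(p)| ≤ W p^(α-2) + c` for `α ∈ (1,2)`,
then `φ` is Lipschitz on `[0,1]` and `φ'` is `(α-1)`-Hölder continuous on `(0,1)`. -/
theorem lipschitz_and_holder_deriv (α : ℝ) (hα : α ∈ Set.Ioo (1:ℝ) 2)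
    (W c : ℝ) (hW : 0 < W) (hc : 0 ≤ c) (φ φ' φ'' : ℝ → ℝ)
    (hcont : ContinuousOn φ (Set.Icc 0 1))
    (hd1 : ∀ p ∈ Set.Ioo (0:ℝ) 1, HasDerivAt φ (φ' p) p)
    (hd2 : ∀ p ∈ Set.Ioo (0:ℝ) 1, HasDerivAt φ' (φ'' p) p)
    (hd2cont : ContinuousOn φ'' (Set.Ioo 0 1))
    (hlim : Filter.Tendsto φ' (nhdsWithin 0 (Set.Ioi 0)) (nhds 0))
    (hbound : ∀ p ∈ Set.Ioo (0:ℝ) 1, |φ'' p| ≤ W * p ^ (α - 2) + c) :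
    (∃ C > 0, ∀ x ∈ Set.Icc (0:ℝ) 1, ∀ y ∈ Set.Icc (0:ℝ) 1,
        |φ x - φ y| ≤ C * |x - y|) ∧
    (∃ C > 0, ∀ x ∈ Set.Ioo (0:ℝ) 1, ∀ y ∈ Set.Ioo (0:ℝ) 1,
        |φ' x - φ' y| ≤ C * |x - y| ^ (α - 1)) := by
  obtain ⟨hα1, hα2⟩ := hα
  set s : ℝ := α - 1 with hs_def
  have hs0 : 0 < s := by simp only [hs_def]; linarith
  have hs1 : s < 1 := by simp only [hs_def]; linarith
  set C : ℝ := W / s + c with hC_def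
  have hCpos : 0 < C := by positivity
  -- Key Hölder estimate for φ' on (0,1), ordered version
  have key : ∀ x ∈ Ioo (0:ℝ) 1, ∀ y ∈ Ioo (0:ℝ) 1, y ≤ x →
      |φ' x - φ' y| ≤ C * (x - y) ^ s := by
    intro x hx y hy hyx
    rcases eq_or_lt_of_le hyx with rfl | hlt
    · simp [Real.zero_rpow hs0.ne']
    have hy0 : (0:ℝ) < y := hy.1
    have hIcc : Icc y x ⊆ Ioo (0:ℝ) 1 := fun t ht => ⟨lt_of_lt_of_le hy0 ht.1, lt_of_le_of_lt ht.2 hx.2⟩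
    set B : ℝ → ℝ := fun t => W / s * t ^ s + c * t - (W / s * y ^ s + c * y) with hB_def
    have hBd : ∀ t, 0 < t → HasDerivAt B (W * t ^ (α - 2) + c) t := by
      intro t ht0
      have h1 : HasDerivAt (fun u : ℝ => u ^ s) (s * t ^ (s - 1)) t :=
        Real.hasDerivAt_rpow_const (Or.inl ht0.ne')
      have h2 := ((h1.const_mul (W / s)).add ((hasDerivAt_id t).const_mul c)).sub_const
        (W / s * y ^ s + c * y)
      convert h2 using 1
      · rfl
      · rfl
      · rfl
      have hα2s : α - 2 = s - 1 := by simp only [hs_def]; ring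
      rw [hα2s]
      field_simp
    have main : ∀ z ∈ Icc y x, ‖φ' z - φ' y‖ ≤ B z := by
      refine image_norm_le_of_norm_deriv_right_le_deriv_boundary'
        (f' := φ'') (B' := fun t => W * t ^ (α - 2) + c) ?_ ?_ ?_ ?_ ?_ ?_
      · exact fun t ht =>
          (((hd2 t (hIcc ht)).continuousAt.continuousWithinAt).sub continuousWithinAt_const)
      · intro t ht
        exact (((hd2 t (hIcc (Ico_subset_Icc_self ht))).sub_const (φ' y))).hasDerivWithinAt
      · simp [hB_def]
      · intro t ht
        exact ((hBd t (hIcc ht).1).continuousAt).continuousWithinAt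
      · intro t ht
        exact (hBd t (hIcc (Ico_subset_Icc_self ht)).1).hasDerivWithinAt
      · intro t ht
        have := hbound t (hIcc (Ico_subset_Icc_self ht))
        simpa [Real.norm_eq_abs] using this
    have hmx := main x ⟨hyx, le_refl x⟩
    rw [Real.norm_eq_abs] at hmx
    have hxy0 : 0 < x - y := sub_pos.2 hlt
    have hxy1 : x - y ≤ 1 := by
      have := hx.2; have := hy.1; linarith
    -- x^s - y^s ≤ (x-y)^s
    have hsub : x ^ s ≤ (x - y) ^ s + y ^ s := by
      have : x = (x - y) + y := by ring
      calc x ^ s = ((x - y) + y) ^ s := by rw [← this]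
        _ ≤ (x - y) ^ s + y ^ s := add_rpow_le_aux hxy0.le hy0.le hs0.le hs1.le
    have hlin : x - y ≤ (x - y) ^ s := by
      have := Real.rpow_le_rpow_of_exponent_ge hxy0 hxy1 hs1.le
      rwa [Real.rpow_one] at this
    have hBx : B x ≤ C * (x - y) ^ s := by
      simp only [hB_def, hC_def]
      have hWs : 0 ≤ W / s := by positivity
      nlinarith [mul_le_mul_of_nonneg_left hsub hWs, mul_le_mul_of_nonneg_left hlin hc]
    exact hmx.trans hBx
  -- Bound on |φ'| on (0,1)
  have hφ'bd : ∀ x ∈ Ioo (0:ℝ) 1, |φ' x| ≤ C := by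
    intro x hx
    have hx0 : (0:ℝ) < x := hx.1
    have hle : |φ' x| ≤ C * x ^ s := by
      have hne : (𝓝[>] (0:ℝ)).NeBot := by infer_instance
      have t1 : Tendsto (fun y => |φ' x - φ' y|) (𝓝[>] (0:ℝ)) (𝓝 |φ' x|) := by
        have := ((tendsto_const_nhds : Tendsto (fun _ : ℝ => φ' x) (𝓝[>] (0:ℝ)) (𝓝 (φ' x))).sub hlim).abs
        simpa using this
      have t2 : Tendsto (fun y => C * (x - y) ^ s) (𝓝[>] (0:ℝ)) (𝓝 (C * x ^ s)) := by
        have hc1 : ContinuousAt (fun y : ℝ => (x - y) ^ s) 0 := by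
          have := (Real.continuousAt_rpow_const (x - 0) s (Or.inl (by simpa using hx0.ne'))).comp
            (ContinuousAt.sub (continuousAt_const) (continuousAt_id) : ContinuousAt (fun y : ℝ => x - y) 0)
          exact this
        have := (hc1.const_smul C).tendsto.mono_left (nhdsWithin_le_nhds (s := Ioi (0:ℝ)))
        simpa [Pi.smul_def, smul_eq_mul] using this
      refine le_of_tendsto_of_tendsto t1 t2 ?_
      filter_upwards [Ioo_mem_nhdsGT_of_mem (⟨le_rfl, hx0⟩ : (0:ℝ) ∈ Ico 0 x)] with y hy
      exact key x hx y ⟨hy.1, hy.2.trans hx.2⟩ hy.2.le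
    have : x ^ s ≤ 1 := Real.rpow_le_one hx.1.le hx.2.le hs0.le
    calc |φ' x| ≤ C * x ^ s := hle
      _ ≤ C * 1 := by nlinarith
      _ = C := mul_one C
  -- Lipschitz, ordered version
  have lip' : ∀ x y : ℝ, 0 < y → y ≤ x → x ≤ 1 → |φ x - φ y| ≤ C * (x - y) := by
    intro x y hy0 hyx hx1
    have hsub : Icc y x ⊆ Icc (0:ℝ) 1 := Icc_subset_Icc hy0.le hx1
    have := norm_image_sub_le_of_norm_deriv_right_le_segment (f := φ) (f' := φ') (C := C)
      (hcont.mono hsub)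
      (fun t ht => (hd1 t ⟨lt_of_lt_of_le hy0 ht.1, lt_of_lt_of_le ht.2 hx1⟩).hasDerivWithinAt)
      (fun t ht => by
        have := hφ'bd t ⟨lt_of_lt_of_le hy0 ht.1, lt_of_lt_of_le ht.2 hx1⟩
        simpa [Real.norm_eq_abs] using this)
      x ⟨hyx, le_refl x⟩
    simpa [Real.norm_eq_abs] using this
  have lip : ∀ x ∈ Icc (0:ℝ) 1, ∀ y ∈ Icc (0:ℝ) 1, y ≤ x → |φ x - φ y| ≤ C * (x - y) := by
    intro x hx y hy hyx
    rcases eq_or_lt_of_le hy.1 with rfl | hy0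
    · -- y = 0
      rcases eq_or_lt_of_le hx.1 with hx0 | hx0
      · simp [← hx0]
      haveI : (𝓝[Ioo (0:ℝ) x] (0:ℝ)).NeBot :=
        mem_closure_iff_nhdsWithin_neBot.1 (by rw [closure_Ioo hx0.ne]; exact ⟨le_rfl, hx0.le⟩)
      have hIoo : Ioo (0:ℝ) x ⊆ Icc (0:ℝ) 1 := fun t ht => ⟨ht.1.le, ht.2.le.trans hx.2⟩
      have t1 : Tendsto (fun y => |φ x - φ y|) (𝓝[Ioo (0:ℝ) x] 0) (𝓝 |φ x - φ 0|) := by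
        have hφ0 : ContinuousWithinAt φ (Ioo (0:ℝ) x) 0 :=
          (hcont.continuousWithinAt ⟨le_rfl, zero_le_one⟩).mono hIoo
        exact (tendsto_const_nhds.sub hφ0).abs
      have t2 : Tendsto (fun y => C * (x - y)) (𝓝[Ioo (0:ℝ) x] 0) (𝓝 (C * (x - 0))) := by
        exact ((continuous_const.mul (continuous_const.sub continuous_id)).tendsto 0).mono_left
          nhdsWithin_le_nhds
      have := le_of_tendsto_of_tendsto t1 t2 ?_
      · simpa using this
      · filter_upwards [self_mem_nhdsWithin] with z hz
        exact lip' x z hz.1 hz.2.le hx.2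
    · exact lip' x y hy0 hyx hx.2
  constructor
  · refine ⟨C, hCpos, ?_⟩
    intro x hx y hy
    rcases le_total y x with h | h
    · have := lip x hx y hy h
      rwa [abs_of_nonneg (sub_nonneg.2 h)]
    · have := lip y hy x hx h
      rwa [abs_sub_comm, abs_sub_comm x y, abs_of_nonneg (sub_nonneg.2 h)]
  · refine ⟨C, hCpos, ?_⟩
    intro x hx y hy
    rcases le_total y x with h | h
    · have := key x hx y hy h
      rwa [abs_of_nonneg (sub_nonneg.2 h)]
    · have := key y hy x hx h
      rwa [abs_sub_comm, abs_sub_comm x y, abs_of_nonneg (sub_nonneg.2 h)]
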